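/- Approximate independence of events with respect to a nonstandard probability measure need not be symmetric: for ν₁ on W = {w₁, w₂, w₃, w₄} defined by ν₁(w₁) = 1 − 2ε + ε², ν₁(w₂) = ν₁(w₃) = ε − ε², ν₁(w₄) = ε² (ε a positive infinitesimal), with U = {w₂, w₄} and V' = {w₄}: U is approximately independent of V' (st(ν₁(V' | U)) = st(ν₁(V'))), but V' is not approximately independent of U (st(ν₁(U | V')) = 1 ≠ 0 = st(ν₁(U))). -/

import Mathlib

/-- The standard part of an element of an ordered field extension of `ℝ`. -/
noncomputable def stPart {K : Type*} [Field K] [LinearOrder K] [IsStrictOrderedRing K] (ι : ℝ →+* K) (b : K) : ℝ :=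
  sInf {a : ℝ | b ≤ ι a}

lemma stPart_infinitesimal {K : Type*} [Field K] [LinearOrder K] [IsStrictOrderedRing K] (ι : ℝ →+* K)
    (b : K) (hb : 0 < b) (h : ∀ r : ℝ, 0 < r → b < ι r) : stPart ι b = 0 := by
  have : {a : ℝ | b ≤ ι a} = Set.Ioi 0 := by
    ext a
    simp only [Set.mem_setOf_eq, Set.mem_Ioi]
    constructor
    · intro ha
      by_contra hle
      push_neg at hle
      have : ι a ≤ 0 := by
        calc ι a ≤ ι 0 := by
              have : ∀ x y : ℝ, x ≤ y → ι x ≤ ι y := by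
                intro x y hxy
                rcases eq_or_lt_of_le hxy with rfl | hlt
                · exact le_refl _
                · have := h (y - x) (by linarith)
                  nlinarith [ι.map_sub y x, hb]
              exact this a 0 hle
          _ = 0 := ι.map_zero
      linarith
    · intro ha; exact (h a ha).le
  rw [stPart, this]
  exact csInf_Ioi

lemma stPart_one {K : Type*} [Field K] [LinearOrder K] [IsStrictOrderedRing K] (ι : ℝ →+* K) (hι : Monotone ι) :
    stPart ι 1 = 1 := by
  have hsm : StrictMono ι := hι.strictMono_of_injective ι.injective
  have : {a : ℝ | (1 : K) ≤ ι a} = Set.Ici 1 := by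
    ext a
    simp only [Set.mem_setOf_eq, Set.mem_Ici]
    rw [← ι.map_one]
    exact ⟨fun h => hsm.le_iff_le.mp h, fun h => hι h⟩
  rw [stPart, this]
  exact csInf_Ici

theorem stmt19 {K : Type*} [Field K] [LinearOrder K] [IsStrictOrderedRing K] (ι : ℝ →+* K) (hι : Monotone ι)
    (ε : K) (hε : 0 < ε) (hinf : ∀ r : ℝ, 0 < r → ε < ι r)
    (p : Fin 4 → K)
    (hp : p 0 = 1 - 2 * ε + ε ^ 2 ∧ p 1 = ε - ε ^ 2 ∧ p 2 = ε - ε ^ 2 ∧ p 3 = ε ^ 2) :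
    -- `st(ν₁(V' | U)) = st(ν₁(V'))`  (U = {w₂,w₄}, V' = {w₄}, ν₁(U) = p 1 + p 3)
    stPart ι (p 3 / (p 1 + p 3)) = stPart ι (p 3) ∧
    -- `st(ν₁(U | V')) = 1`
    stPart ι (p 3 / p 3) = 1 ∧
    -- `st(ν₁(U)) = 0`, so `V'` is not approximately independent of `U`
    stPart ι (p 1 + p 3) = 0 ∧ (1 : ℝ) ≠ 0 := by
  obtain ⟨h0, h1, h2, h3⟩ := hp
  have hεne : ε ≠ 0 := ne_of_gt hε
  have hsum : p 1 + p 3 = ε := by rw [h1, h3]; ring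
  have hε1 : ε < 1 := by simpa using hinf 1 one_pos
  have hεsq : ∀ r : ℝ, 0 < r → ε ^ 2 < ι r := fun r hr =>
    lt_trans (by nlinarith) (hinf r hr)
  have hεsqpos : 0 < ε ^ 2 := by positivity
  have hq : p 3 / (p 1 + p 3) = ε := by
    rw [hsum, h3, pow_two, mul_div_assoc, div_self hεne, mul_one]
  have hq2 : p 3 / p 3 = 1 := by
    rw [h3]; exact div_self (by positivity)
  refine ⟨?_, ?_, ?_, one_ne_zero⟩
  · rw [hq, h3, stPart_infinitesimal ι ε hε hinf,
      stPart_infinitesimal ι (ε ^ 2) hεsqpos hεsq]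
  · rw [hq2]; exact stPart_one ι hι
  · rw [hsum]; exact stPart_infinitesimal ι ε hε hinf
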